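/- Let V be an additive abelian group and α, β, γ, δ, κ ∈ V. Suppose τ, σ, ρ : V → ℝ satisfy, for all x ∈ V and all pairs (ξ,η) from {α,β,γ,δ,κ}, the three relations: (i) a(ξ,η)τ(x)σ(x+ξ+η) = σ(x+ξ)τ(x+η) − τ(x+ξ)σ(x+η); (ii) a(ξ,η)ρ(x)τ(x+ξ+η) = τ(x+ξ)ρ(x+η) − ρ(x+ξ)τ(x+η); (iii) τ(x)τ(x+ξ+η) + ρ(x)σ(x+ξ+η) = b(ξ,η)τ(x+ξ)τ(x+η), where a is skew-symmetric and b symmetric. Assume τ and ρ are nowhere zero. Then for all x ∈ V the four-shift identity holds: a(α,β)a(γ,δ)·ρ(x)·σ(x+α+β+γ+δ) − b(α,γ)b(β,δ)·τ(x+α+δ)·τ(x+β+γ) + b(α,δ)b(β,γ)·τ(x+α+γ)·τ(x+β+δ) = 0. -/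
import Mathlib


theorem four_shift_identity
    {V : Type*} [AddCommGroup V]
    (τ σ ρ : V → ℝ) (α β γ δ κ : V)
    (a b : V → V → ℝ)
    (haskew : ∀ ξ η, a ξ η = - a η ξ)
    (hbsymm : ∀ ξ η, b ξ η = b η ξ)
    (hσ : ∀ ξ ∈ ({α, β, γ, δ, κ} : Set V), ∀ η ∈ ({α, β, γ, δ, κ} : Set V), ∀ x : V,
      a ξ η * τ x * σ (x + ξ + η) =
        σ (x + ξ) * τ (x + η) - τ (x + ξ) * σ (x + η))
    (hρ : ∀ ξ ∈ ({α, β, γ, δ, κ} : Set V), ∀ η ∈ ({α, β, γ, δ, κ} : Set V), ∀ x : V,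
      a ξ η * ρ x * τ (x + ξ + η) =
        τ (x + ξ) * ρ (x + η) - ρ (x + ξ) * τ (x + η))
    (ht : ∀ ξ ∈ ({α, β, γ, δ, κ} : Set V), ∀ η ∈ ({α, β, γ, δ, κ} : Set V), ∀ x : V,
      τ x * τ (x + ξ + η) + ρ x * σ (x + ξ + η) =
        b ξ η * τ (x + ξ) * τ (x + η))
    (hτ0 : ∀ x, τ x ≠ 0) (hρ0 : ∀ x, ρ x ≠ 0) :
    ∀ x : V,
      a α β * a γ δ * ρ x * σ (x + α + β + γ + δ)
      - b α γ * b β δ * τ (x + α + δ) * τ (x + β + γ)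
      + b α δ * b β γ * τ (x + α + γ) * τ (x + β + δ) = 0 := by
  intro x
  have mα : α ∈ ({α, β, γ, δ, κ} : Set V) := by simp
  have mβ : β ∈ ({α, β, γ, δ, κ} : Set V) := by simp
  have mγ : γ ∈ ({α, β, γ, δ, κ} : Set V) := by simp
  have mδ : δ ∈ ({α, β, γ, δ, κ} : Set V) := by simp
  -- superposition lemma S1 with ξ = α
  have S1a : a γ δ * ρ x * σ (x + α + γ + δ) =
      b α γ * τ (x + γ) * τ (x + α + δ) - b α δ * τ (x + δ) * τ (x + α + γ) := by
    apply mul_right_cancel₀ (hτ0 (x + α))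
    have h1 := hσ γ mγ δ mδ (x + α)
    have h2 := ht α mα γ mγ x
    have h3 := ht α mα δ mδ x
    linear_combination ρ x * h1 + τ (x + α + δ) * h2 - τ (x + α + γ) * h3
  -- superposition lemma S1 with ξ = β
  have S1b : a γ δ * ρ x * σ (x + β + γ + δ) =
      b β γ * τ (x + γ) * τ (x + β + δ) - b β δ * τ (x + δ) * τ (x + β + γ) := by
    apply mul_right_cancel₀ (hτ0 (x + β))
    have h1 := hσ γ mγ δ mδ (x + β)
    have h2 := ht β mβ γ mγ x
    have h3 := ht β mβ δ mδ x
    linear_combination ρ x * h1 + τ (x + β + δ) * h2 - τ (x + β + γ) * h3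
  -- dual superposition lemma S2
  have S2 : a γ δ * ρ x * τ (x + α + γ + δ) =
      b α δ * τ (x + α + γ) * ρ (x + δ) - b α γ * τ (x + α + δ) * ρ (x + γ) := by
    apply mul_right_cancel₀ (hτ0 (x + γ))
    have h4 := ht α mα δ mδ (x + γ)
    rw [show x + γ + α = x + α + γ from by abel] at h4
    have h5 := hρ γ mγ δ mδ x
    linear_combination a γ δ * ρ x * h4 + b α δ * τ (x + α + γ) * h5 - ρ (x + γ) * S1a
  -- main identity
  apply mul_right_cancel₀ (hτ0 (x + γ + δ))
  have h6 := hσ α mα β mβ (x + γ + δ)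
  rw [show x + γ + δ + α + β = x + α + β + γ + δ from by abel,
      show x + γ + δ + α = x + α + γ + δ from by abel,
      show x + γ + δ + β = x + β + γ + δ from by abel] at h6
  have h7 := ht β mβ γ mγ (x + δ)
  rw [show x + δ + β + γ = x + β + γ + δ from by abel,
      show x + δ + β = x + β + δ from by abel,
      show x + δ + γ = x + γ + δ from by abel] at h7
  have h8 := ht β mβ δ mδ (x + γ)
  rw [show x + γ + β + δ = x + β + γ + δ from by abel,
      show x + γ + β = x + β + γ from by abel] at h8
  linear_combination ρ x * a γ δ * h6 + τ (x + β + γ + δ) * S1a - σ (x + β + γ + δ) * S2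
    - b α δ * τ (x + α + γ) * h7 + b α γ * τ (x + α + δ) * h8
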